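/- For each semigroup S, there is a 2-coloring of S such that every almost-monochromatic subsemigroup of S is periodic, and every infinite almost-monochromatic subgroup of S contains a subgroup isomorphic to ⊕_n ℤ/2. -/

import Mathlib

/-- `spow a n = a^(n+1)`: the `(n+1)`-st power of `a` in a semigroup. -/
def spow {S : Type*} [Semigroup S] (a : S) : ℕ → S
  | 0 => a
  | n + 1 => spow a n * a

/-- A subset `G` of a semigroup `S` forms a group with identity `e`. -/
def IsSubgroupSet {S : Type*} [Semigroup S] (G : Set S) (e : S) : Prop :=
  e ∈ G ∧ (∀ x ∈ G, ∀ y ∈ G, x * y ∈ G) ∧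
    (∀ x ∈ G, e * x = x ∧ x * e = x) ∧
    ∀ x ∈ G, ∃ y ∈ G, x * y = e ∧ y * x = e

namespace TC
variable {S : Type*} [Semigroup S]

theorem spow_succ (a : S) (n : ℕ) : spow a (n+1) = spow a n * a := rfl

theorem spow_add (a : S) (m n : ℕ) : spow a (m + n + 1) = spow a m * spow a n := by
  induction n with
  | zero => rfl
  | succ k ih =>
      have : m + (k+1) + 1 = (m + k + 1) + 1 := by omega
      rw [this, spow_succ, ih, spow_succ, mul_assoc]

theorem spow_succ' (a : S) (n : ℕ) : spow a (n+1) = a * spow a n := by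
  have := spow_add a 0 n
  simpa [show spow a 0 = a from rfl] using this

theorem spow_spow (a : S) (m k : ℕ) : spow (spow a m) k = spow a ((m+1)*(k+1) - 1) := by
  induction k with
  | zero => simp [spow]
  | succ k ih =>
      rw [spow_succ, ih]
      have h1 : (m+1)*(k+1) - 1 + m + 1 = (m+1)*(k+1+1) - 1 := by
        have e1 : (m+1)*(k+1+1) = (m+1)*(k+1) + (m+1) := by ring
        have e2 : 1 ≤ (m+1)*(k+1) := Nat.one_le_iff_ne_zero.2 (by positivity)
        omega
      calc spow a ((m+1)*(k+1) - 1) * spow a m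
          = spow a ((m+1)*(k+1) - 1 + m + 1) := (spow_add a _ m).symm
        _ = spow a ((m+1)*(k+1+1) - 1) := by rw [h1]

def Per (x : S) : Prop := (Set.range (spow x)).Finite

theorem spow_shift {x : S} {i p : ℕ} (hp : 0 < p) (h : spow x i = spow x (i + p)) :
    ∀ k, spow x (i + k) = spow x (i + k + p) := by
  intro k
  induction k with
  | zero => simpa using h
  | succ k ih =>
      have e1 : i + (k+1) = (i + k) + 1 := by omega
      rw [e1]
      have e2 : i + k + 1 + p = (i + k + p) + 1 := by omega
      rw [e2, spow_succ, spow_succ, ih]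

theorem per_of_eq {x : S} {i j : ℕ} (hij : i < j) (h : spow x i = spow x j) : Per x := by
  set p := j - i with hp
  have hp0 : 0 < p := by omega
  have hj : j = i + p := by omega
  have hsh := spow_shift hp0 (by rw [← hj]; exact h)
  have key : ∀ n, spow x n ∈ (spow x) '' (Set.Iio j) := by
    intro n
    induction n using Nat.strong_induction_on with
    | _ n ih =>
        by_cases hn : n < j
        · exact ⟨n, hn, rfl⟩
        · have hn' : i + (n - j) + p = n := by omega
          have : spow x (n - p) = spow x n := by
            have := hsh (n - j)
            rw [hn'] at this
            have e : i + (n - j) = n - p := by omega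
            rw [e] at this; exact this
          rw [← this]
          exact ih (n - p) (by omega)
  have : Set.range (spow x) ⊆ (spow x) '' (Set.Iio j) := by
    rintro _ ⟨n, rfl⟩; exact key n
  exact ((Set.finite_Iio j).image _).subset this

theorem spow_inj {x : S} (h : ¬ Per x) : Function.Injective (spow x) := by
  intro a b hab
  by_contra hne
  rcases Nat.lt_or_ge a b with hlt | hge
  · exact h (per_of_eq hlt hab)
  · have : b < a := by omega
    exact h (per_of_eq this hab.symm)


/-- `x` has least period `n ≥ 1`: `x^(n+1) = x` and no smaller positive power works. -/
def IsOrd (x : S) (n : ℕ) : Prop :=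
  1 ≤ n ∧ spow x n = x ∧ ∀ m, 1 ≤ m → m < n → spow x m ≠ x

theorem isOrd_unique {x : S} {n m : ℕ} (hn : IsOrd x n) (hm : IsOrd x m) : n = m := by
  by_contra hne
  rcases Nat.lt_or_ge n m with h | h
  · exact hm.2.2 n hn.1 h hn.2.1
  · exact hn.2.2 m hm.1 (by omega) hm.2.1

theorem spow_add_ord {x : S} {n : ℕ} (h : spow x n = x) :
    ∀ m, spow x (m + n) = spow x m := by
  intro m
  induction m with
  | zero => simpa [spow] using h
  | succ k ih =>
      have e : k + 1 + n = k + n + 1 := by omega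
      rw [e, spow_succ, ih, ← spow_succ]

theorem spow_mul_add_ord {x : S} {n : ℕ} (h : spow x n = x) (t : ℕ) :
    ∀ m, spow x (m + t * n) = spow x m := by
  induction t with
  | zero => intro m; simp
  | succ s ih =>
      intro m
      have e : m + (s+1) * n = (m + s * n) + n := by ring
      rw [e, spow_add_ord h, ih]

theorem spow_modEq {x : S} {n : ℕ} (h : spow x n = x) {a b : ℕ}
    (hab : a % n = b % n) : spow x a = spow x b := by
  rcases Nat.le_total a b with hle | hle
  · have hd : n ∣ b - a := (Nat.modEq_iff_dvd' hle).1 hab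
    rcases hd with ⟨t, ht⟩
    have hb : b = a + t * n := by rw [mul_comm t n]; omega
    rw [hb, spow_mul_add_ord h]
  · have hd : n ∣ a - b := (Nat.modEq_iff_dvd' hle).1 hab.symm
    rcases hd with ⟨t, ht⟩
    have hb : a = b + t * n := by rw [mul_comm t n]; omega
    rw [hb, spow_mul_add_ord h]

theorem spow_inj_lt_ord {x : S} {n : ℕ} (hx : IsOrd x n) {a b : ℕ}
    (ha : a < n) (hb : b < n) (h : spow x a = spow x b) : a = b := by
  by_contra hne
  -- wlog a < b
  wlog hab : a < b generalizing a b
  · exact this hb ha h.symm (by omega) (by omega)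
  set p := b - a with hpdef
  have hp0 : 0 < p := by omega
  have hsh := spow_shift hp0 (by rw [show a + p = b by omega]; exact h)
  have hk : a + (n - p - a) = n - p := by omega
  have h1 : spow x (n - p) = spow x n := by
    have := hsh (n - p - a)
    rw [hk] at this
    rw [this, show n - p + p = n by omega]
  have h2 : spow x (n - p) = x := by rw [h1, hx.2.1]
  exact hx.2.2 (n - p) (by omega) (by omega) h2

theorem spow_mod_inj {x : S} {n : ℕ} (hx : IsOrd x n) {a b : ℕ}
    (h : spow x a = spow x b) : a % n = b % n := by
  have hn : 0 < n := hx.1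
  have h1 : spow x (a % n) = spow x a := spow_modEq hx.2.1 (by simp [Nat.mod_mod_of_dvd])
  have h2 : spow x (b % n) = spow x b := spow_modEq hx.2.1 (by simp [Nat.mod_mod_of_dvd])
  exact spow_inj_lt_ord hx (Nat.mod_lt _ hn) (Nat.mod_lt _ hn) (h1.trans (h.trans h2.symm))

open Classical in
noncomputable def ordF (x : S) : ℕ :=
  if h : ∃ n, IsOrd x n then h.choose else 0

theorem isOrd_ordF {x : S} (h : ∃ n, IsOrd x n) : IsOrd x (ordF x) := by
  rw [ordF, dif_pos h]; exact h.choose_spec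

theorem ordF_eq {x : S} {n : ℕ} (h : IsOrd x n) : ordF x = n :=
  isOrd_unique (isOrd_ordF ⟨n, h⟩) h

def Dset (S : Type*) [Semigroup S] : Set S := {x | 3 ≤ ordF x ∧ IsOrd x (ordF x)}

noncomputable def invF (x : S) : S := spow x (ordF x - 2)

theorem mem_Dset {x : S} {n : ℕ} (h : IsOrd x n) (h3 : 3 ≤ n) : x ∈ Dset S := by
  have := ordF_eq h
  exact ⟨by omega, this ▸ h⟩

theorem isOrd_invF {x : S} (hx : x ∈ Dset S) : IsOrd (invF x) (ordF x) := by
  obtain ⟨h3, hord⟩ := hx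
  set n := ordF x with hn
  refine ⟨by omega, ?_, ?_⟩
  · rw [invF, ← hn, spow_spow]
    have key : ((n - 2 + 1) * (n + 1) - 1) % n = (n - 2) % n := by
      have e0 : (n-1) * (n+1) = (n-1) * n + (n - 1) := by ring
      have e1 : (n - 2 + 1) * (n + 1) - 1 = (n - 2) + (n-1) * n := by
        have : n - 2 + 1 = n - 1 := by omega
        rw [this, e0]; omega
      rw [e1, Nat.add_mul_mod_self_right]
    exact spow_modEq hord.2.1 key
  · intro m hm1 hmn heq
    rw [invF, ← hn, spow_spow] at heq
    have hmod := spow_mod_inj hord heq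
    -- (n-2+1)*(m+1) - 1 ≡ n-2 [MOD n] implies n ∣ m
    set a := (n - 2 + 1) * (m + 1) - 1 with ha
    have hB : a + (m+2) = n * (m+1) := by
      have e0 : (n - 2 + 1) * (m+1) + 1 * (m+1) = (n - 2 + 1 + 1) * (m+1) := by ring
      have e1 : n - 2 + 1 + 1 = n := by omega
      rw [e1] at e0
      have hpos : 1 ≤ (n - 2 + 1) * (m + 1) := Nat.one_le_iff_ne_zero.2 (by positivity)
      omega
    have hmeq : a ≡ (n - 2) [MOD n] := hmod
    have h2 : a + (m+2) ≡ (n-2) + (m+2) [MOD n] := hmeq.add_right _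
    rw [hB] at h2
    have h3 : (0 : ℕ) ≡ (n-2)+(m+2) [MOD n] := by
      calc (0:ℕ) ≡ n * (m+1) [MOD n] := (Nat.modEq_zero_iff_dvd.2 ⟨m+1, rfl⟩).symm
        _ ≡ (n-2)+(m+2) [MOD n] := h2
    have h4 : (n-2)+(m+2) = m + n := by omega
    rw [h4] at h3
    have h5 : (0:ℕ) ≡ m [MOD n] := by
      calc (0:ℕ) ≡ m + n [MOD n] := h3
        _ ≡ m + 0 [MOD n] := Nat.ModEq.add_left m (Nat.modEq_zero_iff_dvd.2 dvd_rfl).symm.symm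
        _ = m := by omega
    have h6 : n ∣ m := (Nat.modEq_zero_iff_dvd.1 h5.symm)
    rcases h6 with ⟨t, rfl⟩
    rcases t with _ | t
    · omega
    · have : n ≤ n * (t+1) := Nat.le_mul_of_pos_right n (by omega)
      omega

theorem ordF_invF {x : S} (hx : x ∈ Dset S) : ordF (invF x) = ordF x :=
  ordF_eq (isOrd_invF hx)

theorem invF_mem_Dset {x : S} (hx : x ∈ Dset S) : invF x ∈ Dset S :=
  mem_Dset (isOrd_invF hx) hx.1

theorem invF_invF {x : S} (hx : x ∈ Dset S) : invF (invF x) = x := by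
  obtain ⟨h3, hord⟩ := id hx
  have h1 : invF (invF x) = spow (invF x) (ordF x - 2) := by
    rw [invF, ordF_invF hx]
  rw [h1, invF, spow_spow]
  obtain ⟨k, hk⟩ : ∃ k, ordF x = k + 3 := ⟨ordF x - 3, by omega⟩
  rw [hk]
  have hord' : spow x (k+3) = x := by rw [← hk]; exact hord.2.1
  have e : (k + 3 - 2 + 1) * (k + 3 - 2 + 1) - 1 = (k+1) * (k+3) := by
    have e2 : k + 3 - 2 + 1 = k + 2 := by omega
    rw [e2]
    have : (k+2)*(k+2) = (k+1)*(k+3) + 1 := by ring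
    omega
  have key : ((k + 3 - 2 + 1) * (k + 3 - 2 + 1) - 1) % (k+3) = 0 % (k+3) := by
    rw [e]; simp [Nat.mul_mod_left]
  have := spow_modEq hord' key
  simpa [spow] using this

theorem invF_ne {x : S} (hx : x ∈ Dset S) : invF x ≠ x := by
  intro h
  obtain ⟨h3, hord⟩ := id hx
  have h0 : spow x (ordF x - 2) = spow x 0 := by
    rw [← invF]; simpa [spow] using h
  have := spow_mod_inj hord h0
  rw [Nat.mod_eq_of_lt (by omega), Nat.zero_mod] at this
  omega

/-- Pairing setoid: each `x ∈ Dset` is paired with `invF x`. -/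
def pairSetoid (S : Type*) [Semigroup S] : Setoid S where
  r x y := x = y ∨ (x ∈ Dset S ∧ invF x = y)
  iseqv := by
    constructor
    · intro x; exact Or.inl rfl
    · intro x y h
      rcases h with h | ⟨hx, h⟩
      · exact Or.inl h.symm
      · subst h
        exact Or.inr ⟨invF_mem_Dset hx, invF_invF hx⟩
    · intro x y z hxy hyz
      rcases hxy with h | ⟨hx, h⟩
      · subst h; exact hyz
      · subst h
        rcases hyz with h | ⟨hy, h⟩
        · subst h; exact Or.inr ⟨hx, rfl⟩
        · subst h; exact Or.inl (invF_invF hx).symm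

open Classical in
noncomputable def pc (x : S) : Fin 2 :=
  if x = (Quotient.mk (pairSetoid S) x).out then 0 else 1

theorem pc_invF {x : S} (hx : x ∈ Dset S) : pc (invF x) ≠ pc x := by
  classical
  have hrel : (pairSetoid S).r (invF x) x := Or.inr ⟨invF_mem_Dset hx, invF_invF hx⟩
  have hq : Quotient.mk (pairSetoid S) (invF x) = Quotient.mk (pairSetoid S) x :=
    Quotient.sound hrel
  have hout : (pairSetoid S).r (Quotient.mk (pairSetoid S) x).out x :=
    @Quotient.mk_out S (pairSetoid S) x
  have hne := invF_ne hx
  unfold pc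
  rw [hq]
  rcases hout with hre | ⟨hrD, hrx⟩
  · have c1 : ¬ (invF x = (Quotient.mk (pairSetoid S) x).out) := by
      rw [hre]; exact hne
    have c2 : x = (Quotient.mk (pairSetoid S) x).out := hre.symm
    rw [if_neg c1, if_pos c2]; decide
  · have hr2 : (Quotient.mk (pairSetoid S) x).out = invF x :=
      (invF_invF hrD).symm.trans (congrArg invF hrx)
    have c1 : invF x = (Quotient.mk (pairSetoid S) x).out := hr2.symm
    have c2 : ¬ (x = (Quotient.mk (pairSetoid S) x).out) :=
      fun h => invF_ne hrD (hrx.trans h)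
    rw [if_pos c1, if_neg c2]; decide

/-- squaring map -/
def sq (x : S) : S := x * x

theorem sq_iterate (x : S) (k : ℕ) : sq^[k] x = spow x (2^k - 1) := by
  induction k with
  | zero => simp [spow]
  | succ k ih =>
      rw [Function.iterate_succ_apply', ih, sq]
      have h1 : 1 ≤ 2^k := Nat.one_le_two_pow
      have e : (2^k - 1) + (2^k - 1) + 1 = 2^(k+1) - 1 := by
        have : 2^(k+1) = 2 * 2^k := by rw [pow_succ]; ring
        omega
      rw [← spow_add, e]

theorem spow_sq (x : S) (k : ℕ) : spow (sq x) k = spow x (2*k + 1) := by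
  have := spow_spow x 1 k
  have e : (1+1)*(k+1) - 1 = 2*k+1 := by omega
  rw [e] at this
  exact this

theorem per_sq_iff (x : S) : Per (sq x) ↔ Per x := by
  constructor
  · intro h
    have h1 : (Set.range (fun k => spow x (2*k+1))).Finite := by
      have : Set.range (fun k => spow x (2*k+1)) = Set.range (spow (sq x)) := by
        ext y; constructor
        · rintro ⟨k, rfl⟩; exact ⟨k, (spow_sq x k)⟩
        · rintro ⟨k, rfl⟩; exact ⟨k, (spow_sq x k).symm⟩
      rw [this]; exact h
    have h2 : Set.range (spow x) ⊆
        {x} ∪ (Set.range (fun k => spow x (2*k+1))) ∪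
          ((fun z => z * x) '' (Set.range (fun k => spow x (2*k+1)))) := by
      rintro _ ⟨n, rfl⟩
      match n with
      | 0 => exact Or.inl (Or.inl rfl)
      | Nat.succ m =>
          rcases Nat.even_or_odd m with ⟨k, hk⟩ | ⟨k, hk⟩
          · -- m = 2k, n = 2k+1
            refine Or.inl (Or.inr ⟨k, ?_⟩)
            show spow x (2*k+1) = spow x (m+1)
            congr 1; omega
          · -- m = 2k+1, n = 2k+2
            refine Or.inr ⟨spow x (2*k+1), ⟨k, rfl⟩, ?_⟩
            show spow x (2*k+1) * x = spow x (m+1)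
            rw [← spow_succ]
            congr 1; omega
    exact ((Set.finite_singleton x).union h1 |>.union (h1.image _)).subset h2
  · intro h
    have : Set.range (spow (sq x)) ⊆ Set.range (spow x) := by
      rintro _ ⟨k, rfl⟩; exact ⟨2*k+1, (spow_sq x k).symm⟩
    exact h.subset this

theorem per_sq_iterate_iff (x : S) (m : ℕ) : Per (sq^[m] x) ↔ Per x := by
  induction m with
  | zero => rfl
  | succ k ih =>
      rw [Function.iterate_succ_apply', per_sq_iff, ih]

theorem sq_iterate_inj {x : S} (h : ¬ Per x) {a b : ℕ} (hab : sq^[a] x = sq^[b] x) :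
    a = b := by
  rw [sq_iterate, sq_iterate] at hab
  have := spow_inj h hab
  have h1 : 1 ≤ 2^a := Nat.one_le_two_pow
  have h2 : 1 ≤ 2^b := Nat.one_le_two_pow
  have : (2:ℕ)^a = 2^b := by omega
  exact Nat.pow_right_injective (le_refl 2) this

/-- Orbit-merge setoid for the squaring map. -/
def sqSetoid (S : Type*) [Semigroup S] : Setoid S where
  r x y := ∃ m k, sq^[m] x = sq^[k] y
  iseqv := by
    constructor
    · intro x; exact ⟨0, 0, rfl⟩
    · rintro x y ⟨m, k, h⟩; exact ⟨k, m, h.symm⟩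
    · rintro x y z ⟨m, k, h1⟩ ⟨p, q, h2⟩
      refine ⟨p + m, k + q, ?_⟩
      have e1 : sq^[p] (sq^[m] x) = sq^[p] (sq^[k] y) := congrArg _ h1
      rw [← Function.iterate_add_apply, ← Function.iterate_add_apply] at e1
      have e2 : sq^[k] (sq^[p] y) = sq^[k] (sq^[q] z) := congrArg _ h2
      rw [← Function.iterate_add_apply, ← Function.iterate_add_apply] at e2
      rw [e1, show p + k = k + p by omega, e2]

theorem per_of_rel {x y : S} (h : (sqSetoid S).r x y) (hy : Per y) : Per x := by
  rcases h with ⟨m, k, hmk⟩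
  have h1 : Per (sq^[k] y) := (per_sq_iterate_iff y k).2 hy
  rw [← hmk] at h1
  exact (per_sq_iterate_iff x m).1 h1

noncomputable def sqRep (x : S) : S := (Quotient.mk (sqSetoid S) x).out

theorem sqRep_rel (x : S) : ∃ m k, sq^[m] x = sq^[k] (sqRep x) := by
  have h : (sqSetoid S).r (sqRep x) x := @Quotient.mk_out S (sqSetoid S) x
  rcases h with ⟨m, k, hmk⟩
  exact ⟨k, m, hmk.symm⟩

theorem sqRep_eq_of_rel {x y : S} (h : (sqSetoid S).r x y) : sqRep x = sqRep y := by
  unfold sqRep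
  rw [Quotient.sound h]

theorem not_per_sqRep {x : S} (h : ¬ Per x) : ¬ Per (sqRep x) := by
  intro hper
  have hrel : (sqSetoid S).r x (sqRep x) :=
    (sqSetoid S).iseqv.symm (@Quotient.mk_out S (sqSetoid S) x)
  exact h (per_of_rel hrel hper)

noncomputable def phi (x : S) : ℤ :=
  ((sqRep_rel x).choose_spec.choose : ℤ) - (sqRep_rel x).choose

theorem phi_welldef {x : S} (hx : ¬ Per x) {m k m' k' : ℕ}
    (h1 : sq^[m] x = sq^[k] (sqRep x)) (h2 : sq^[m'] x = sq^[k'] (sqRep x)) :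
    (k : ℤ) - m = (k' : ℤ) - m' := by
  have hrep : ¬ Per (sqRep x) := not_per_sqRep hx
  have e1 : sq^[m' + m] x = sq^[m' + k] (sqRep x) := by
    rw [Function.iterate_add_apply, Function.iterate_add_apply, h1]
  have e2 : sq^[m + m'] x = sq^[m + k'] (sqRep x) := by
    rw [Function.iterate_add_apply, Function.iterate_add_apply, h2]
  rw [show m + m' = m' + m by omega] at e2
  have := sq_iterate_inj hrep (e1.symm.trans e2)
  omega

theorem phi_spec (x : S) : sq^[(sqRep_rel x).choose] x
    = sq^[(sqRep_rel x).choose_spec.choose] (sqRep x) :=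
  (sqRep_rel x).choose_spec.choose_spec

theorem phi_eq {x : S} (hx : ¬ Per x) {m k : ℕ}
    (h : sq^[m] x = sq^[k] (sqRep x)) : phi x = (k : ℤ) - m := by
  rw [phi]
  exact phi_welldef hx (phi_spec x) h

theorem phi_sq {x : S} (hx : ¬ Per x) : phi (sq x) = phi x + 1 := by
  have hrel : (sqSetoid S).r (sq x) x := ⟨0, 1, rfl⟩
  have hrep : sqRep (sq x) = sqRep x := sqRep_eq_of_rel hrel
  have hsx : ¬ Per (sq x) := fun h => hx ((per_sq_iff x).1 h)
  obtain ⟨m, k, hmk0⟩ := sqRep_rel (sq x)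
  have e1 : phi (sq x) = (k : ℤ) - m := phi_eq hsx hmk0
  have hmk := hmk0
  rw [hrep] at hmk
  have h2 : sq^[m + 1] x = sq^[k] (sqRep x) := by
    rw [Function.iterate_add_apply]
    simpa using hmk
  have e2 : phi x = (k : ℤ) - (m + 1) := phi_eq hx h2
  rw [e1, e2]; push_cast; ring

theorem phi_iterate {x : S} (hx : ¬ Per x) (j : ℕ) : phi (sq^[j] x) = phi x + j := by
  induction j with
  | zero => simp
  | succ j ih =>
      have hj : ¬ Per (sq^[j] x) := fun h => hx ((per_sq_iterate_iff x j).1 h)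
      rw [Function.iterate_succ_apply', phi_sq hj, ih]
      push_cast; ring

/-- Log-parity coloring of the integers. -/
def h2 : ℤ → Fin 2 := fun z => ⟨Nat.log 2 z.toNat % 2, Nat.mod_lt _ (by norm_num)⟩

theorem h2_exists (a : ℤ) (col : Fin 2) (K : ℕ) : ∃ k : ℕ, K ≤ k ∧ h2 (a + k) = col := by
  set t := a.natAbs + K + 1 with ht
  set e := 2 * t + col.val with he
  have h2t : t < 2^t := Nat.lt_two_pow_self (n := t)
  have hte : 2^t ≤ 2^e := Nat.pow_le_pow_right (by norm_num) (by omega)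
  have hM : (t : ℤ) < (2^e : ℕ) := by exact_mod_cast Nat.lt_of_lt_of_le h2t hte
  have haK : a + K < ((2^e : ℕ) : ℤ) := by
    have : a ≤ a.natAbs := Int.le_natAbs
    omega
  refine ⟨((2^e : ℕ) : ℤ) - a |>.toNat, by omega, ?_⟩
  have hnn : (0:ℤ) ≤ ((2^e : ℕ) : ℤ) - a := by omega
  have hak : a + (((2^e : ℕ) : ℤ) - a).toNat = ((2^e : ℕ) : ℤ) := by omega
  rw [hak]
  have hlog : Nat.log 2 (((2^e : ℕ) : ℤ)).toNat = e := by
    rw [Int.toNat_natCast]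
    exact Nat.log_pow (by norm_num) e
  unfold h2
  apply Fin.ext
  simp only [hlog]
  have : col.val < 2 := col.isLt
  omega

open Classical in
/-- The true coloring. -/
noncomputable def color (x : S) : Fin 2 := if Per x then pc x else h2 (phi x)

theorem color_of_per {x : S} (h : Per x) : color x = pc x := by
  unfold color; exact if_pos h
theorem color_of_not_per {x : S} (h : ¬ Per x) : color x = h2 (phi x) := by
  unfold color; exact if_neg h

theorem per_of_mem_Dset {x : S} (hx : x ∈ Dset S) : Per x := by
  obtain ⟨h3, hord⟩ := hx
  have : spow x 0 = spow x (ordF x) := by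
    rw [hord.2.1]; rfl
  exact per_of_eq (by omega) this

theorem key_infinite {A : Set S} (hA : ∀ x ∈ A, ∀ y ∈ A, x * y ∈ A)
    {t : S} (ht : t ∈ A) (hper : ¬ Per t) (col : Fin 2) :
    {x ∈ A | color x = col}.Infinite := by
  have hmem : ∀ k, sq^[k] t ∈ A := by
    intro k
    induction k with
    | zero => exact ht
    | succ k ih =>
        rw [Function.iterate_succ_apply']
        exact hA _ ih _ ih
  have hcol : ∀ k, color (sq^[k] t) = h2 (phi t + k) := by
    intro k
    have hk : ¬ Per (sq^[k] t) := fun h => hper ((per_sq_iterate_iff t k).1 h)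
    rw [color_of_not_per hk, phi_iterate hper]
  set B := {k : ℕ | h2 (phi t + k) = col} with hB
  have hBinf : B.Infinite := by
    apply Set.infinite_of_not_bddAbove
    rintro ⟨b, hb⟩
    obtain ⟨k, hk1, hk2⟩ := h2_exists (phi t) col (b + 1)
    have := hb hk2
    omega
  have himg : (fun k => sq^[k] t) '' B ⊆ {x ∈ A | color x = col} := by
    rintro _ ⟨k, hk, rfl⟩
    exact ⟨hmem k, by rw [hcol k]; exact hk⟩
  refine Set.Infinite.mono himg ?_
  exact hBinf.image (fun a _ b _ hab => sq_iterate_inj hper hab)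

theorem per_of_almost {A : Set S} (hA : ∀ x ∈ A, ∀ y ∈ A, x * y ∈ A)
    (hmono : ∃ col : Fin 2, {x ∈ A | color x ≠ col}.Finite) :
    ∀ t ∈ A, Per t := by
  rintro t ht
  by_contra hper
  obtain ⟨col, hfin⟩ := hmono
  have hinf := key_infinite hA ht hper (col + 1)
  have hsub : {x ∈ A | color x = col + 1} ⊆ {x ∈ A | color x ≠ col} := by
    rintro x ⟨hxA, hxc⟩
    refine ⟨hxA, ?_⟩
    rw [hxc]
    exact (by decide : ∀ c : Fin 2, c + 1 ≠ c) col
  exact hinf (hfin.subset hsub)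

section BooleanMonoid

open Classical

variable {M : Type*} [CommMonoid M] [Infinite M]

noncomputable def pickM (Q : Finset M) : M := (Infinite.exists_notMem_finset Q).choose

theorem pickM_not_mem (Q : Finset M) : pickM Q ∉ Q :=
  (Infinite.exists_notMem_finset Q).choose_spec

open Classical in
noncomputable def Qs : ℕ → Finset M
  | 0 => {1}
  | n+1 => Qs n ∪ (Qs n).image (fun q => pickM (Qs n) * q)

noncomputable def aseq (n : ℕ) : M := pickM (Qs n)

theorem aseq_def (n : ℕ) : (aseq n : M) = pickM (Qs n) := rfl

theorem one_mem_Qs (n : ℕ) : (1 : M) ∈ Qs n := by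
  induction n with
  | zero => simp [Qs]
  | succ n ih => rw [Qs]; exact Finset.mem_union_left _ ih

theorem mul_mem_Qs (hsq : ∀ x : M, x * x = 1) {n : ℕ} :
    ∀ {p q : M}, p ∈ Qs n → q ∈ Qs n → p * q ∈ Qs n := by
  induction n with
  | zero =>
      intro p q hp hq
      simp only [Qs, Finset.mem_singleton] at hp hq ⊢
      rw [hp, hq, one_mul]
  | succ n ih =>
      intro p q hp hq
      rw [Qs] at hp hq ⊢
      rcases Finset.mem_union.1 hp with hp1 | hp2
      · rcases Finset.mem_union.1 hq with hq1 | hq2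
        · exact Finset.mem_union_left _ (ih hp1 hq1)
        · obtain ⟨q', hq', rfl⟩ := Finset.mem_image.1 hq2
          refine Finset.mem_union_right _ (Finset.mem_image.2 ⟨p * q', ih hp1 hq', ?_⟩)
          rw [mul_left_comm]
      · obtain ⟨p', hp', rfl⟩ := Finset.mem_image.1 hp2
        rcases Finset.mem_union.1 hq with hq1 | hq2
        · refine Finset.mem_union_right _ (Finset.mem_image.2 ⟨p' * q, ih hp' hq1, ?_⟩)
          rw [mul_assoc]
        · obtain ⟨q', hq', rfl⟩ := Finset.mem_image.1 hq2
          refine Finset.mem_union_left _ ?_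
          have e : (pickM (Qs n) * p') * (pickM (Qs n) * q') = p' * q' := by
            calc (pickM (Qs n) * p') * (pickM (Qs n) * q')
                = (pickM (Qs n) * pickM (Qs n)) * (p' * q') := by
                  rw [mul_mul_mul_comm]
              _ = p' * q' := by rw [hsq, one_mul]
          rw [e]; exact ih hp' hq'

theorem Qs_subset_succ (n : ℕ) : (Qs n : Finset M) ⊆ Qs (n+1) := by
  rw [Qs]; exact Finset.subset_union_left

theorem aseq_not_mem (n : ℕ) : (aseq n : M) ∉ Qs n := by
  rw [aseq_def]; exact pickM_not_mem _

theorem aseq_mem_succ (n : ℕ) : (aseq n : M) ∈ Qs (n+1) := by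
  rw [aseq_def, Qs]
  refine Finset.mem_union_right _ (Finset.mem_image.2 ⟨1, one_mem_Qs n, ?_⟩)
  rw [mul_one]

theorem prod_mem_Qs (hsq : ∀ x : M, x * x = 1) :
    ∀ n (s : Finset ℕ), s ⊆ Finset.range n → (∏ i ∈ s, (aseq i : M)) ∈ Qs n := by
  intro n
  induction n with
  | zero =>
      intro s hs
      have : s = ∅ := by
        rw [Finset.range_zero] at hs
        exact Finset.subset_empty.1 hs
      rw [this, Finset.prod_empty]; exact one_mem_Qs 0
  | succ n ih =>
      intro s hs
      by_cases hn : n ∈ s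
      · have herase : s.erase n ⊆ Finset.range n := by
          intro i hi
          have h1 := Finset.mem_erase.1 hi
          have h2 := hs (Finset.mem_of_mem_erase hi)
          rw [Finset.mem_range] at h2 ⊢
          omega
        have hP := ih _ herase
        rw [← Finset.mul_prod_erase s _ hn, aseq_def, Qs]
        exact Finset.mem_union_right _ (Finset.mem_image.2 ⟨_, hP, rfl⟩)
      · have hsub : s ⊆ Finset.range n := by
          intro i hi
          have := hs hi
          rw [Finset.mem_range] at this ⊢
          rcases Nat.lt_succ_iff_lt_or_eq.1 this with h | h
          · exact h
          · exact absurd (h ▸ hi) hn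
        exact Qs_subset_succ n (ih _ hsub)

theorem prod_aseq_eq_one (hsq : ∀ x : M, x * x = 1) {s : Finset ℕ}
    (h : (∏ i ∈ s, (aseq i : M)) = 1) : s = ∅ := by
  by_contra hne
  have hnonempty : s.Nonempty := Finset.nonempty_of_ne_empty hne
  set n := s.max' hnonempty with hn
  have hmem : n ∈ s := s.max'_mem hnonempty
  have herase : s.erase n ⊆ Finset.range n := by
    intro i hi
    have h1 := Finset.mem_erase.1 hi
    have h2 := s.le_max' i (Finset.mem_of_mem_erase hi)
    rw [Finset.mem_range]
    omega
  have hP := prod_mem_Qs hsq n _ herase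
  have hsplit : (aseq n : M) * (∏ i ∈ s.erase n, (aseq i : M)) = 1 := by
    rw [Finset.mul_prod_erase s _ hmem]; exact h
  have : (aseq n : M) = ∏ i ∈ s.erase n, (aseq i : M) := by
    calc (aseq n : M) = aseq n * 1 := (mul_one _).symm
      _ = aseq n * ((aseq n) * ∏ i ∈ s.erase n, (aseq i : M)) := by rw [hsplit]
      _ = ((aseq n) * (aseq n)) * ∏ i ∈ s.erase n, (aseq i : M) := by rw [mul_assoc]
      _ = ∏ i ∈ s.erase n, (aseq i : M) := by rw [hsq, one_mul]
  exact aseq_not_mem n (this ▸ hP)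

theorem prod_sq_one (hsq : ∀ x : M, x * x = 1) (u : Finset ℕ) :
    (∏ i ∈ u, (aseq i : M)) * (∏ i ∈ u, (aseq i : M)) = 1 := by
  rw [← Finset.prod_mul_distrib]
  calc (∏ i ∈ u, (aseq i : M) * aseq i) = ∏ _i ∈ u, (1:M) :=
        Finset.prod_congr rfl fun i _ => hsq _
    _ = 1 := Finset.prod_const_one

theorem prod_symmDiff (hsq : ∀ x : M, x * x = 1) (s t : Finset ℕ) :
    (∏ i ∈ symmDiff s t, (aseq i : M)) = (∏ i ∈ s, (aseq i : M)) * ∏ i ∈ t, (aseq i : M) := by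
  have hdisj : Disjoint (symmDiff s t) (s ∩ t) := by
    rw [Finset.disjoint_left]
    intro a ha hb
    rw [Finset.mem_symmDiff] at ha
    rw [Finset.mem_inter] at hb
    tauto
  have hcover : symmDiff s t ∪ s ∩ t = s ∪ t := by
    ext a
    simp only [Finset.mem_union, Finset.mem_symmDiff, Finset.mem_inter]
    tauto
  have h1 : (∏ i ∈ s, (aseq i : M)) * ∏ i ∈ t, (aseq i : M)
      = (∏ i ∈ s ∪ t, (aseq i : M)) * ∏ i ∈ s ∩ t, (aseq i : M) := by
    rw [Finset.prod_union_inter]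
  rw [h1, ← hcover, Finset.prod_union hdisj, mul_assoc, prod_sq_one hsq, mul_one]

theorem support_add (x y : DirectSum ℕ (fun _ => ZMod 2)) :
    (x + y).support = symmDiff x.support y.support := by
  ext i
  rw [DFinsupp.mem_support_iff, Finset.mem_symmDiff]
  rw [DFinsupp.mem_support_iff, DFinsupp.mem_support_iff]
  have hadd : (x + y) i = x i + y i := DirectSum.add_apply x y i
  rw [hadd]
  have key : ∀ a b : ZMod 2, (a + b ≠ 0 ↔ ((a ≠ 0 ∧ ¬ b ≠ 0) ∨ (b ≠ 0 ∧ ¬ a ≠ 0))) := by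
    decide
  exact key (x i) (y i)

theorem zmod2_ne_zero : ∀ a : ZMod 2, a ≠ 0 → a = 1 := by decide

theorem exists_directSum_hom (hsq : ∀ x : M, x * x = 1) :
    ∃ f : DirectSum ℕ (fun _ => ZMod 2) → M, Function.Injective f ∧
      ∀ x y, f (x + y) = f x * f y := by
  refine ⟨fun x => ∏ i ∈ x.support, (aseq i : M), ?_, ?_⟩
  · intro x y hxy
    simp only at hxy
    have hΔ : (∏ i ∈ symmDiff x.support y.support, (aseq i : M)) = 1 := by
      rw [prod_symmDiff hsq, hxy, prod_sq_one hsq]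
    have hempty := prod_aseq_eq_one hsq hΔ
    have hsupp : x.support = y.support := by
      have := symmDiff_eq_bot.1 (by rw [← Finset.bot_eq_empty] at hempty; exact hempty)
      exact this
    apply DFinsupp.ext
    intro i
    by_cases hi : i ∈ x.support
    · have hxi : x i = 1 := zmod2_ne_zero _ (DFinsupp.mem_support_iff.1 hi)
      have hyi : y i = 1 := zmod2_ne_zero _ (DFinsupp.mem_support_iff.1 (hsupp ▸ hi))
      rw [hxi, hyi]
    · have hxi : x i = 0 := of_not_not (fun h => hi (DFinsupp.mem_support_iff.2 h))
      have hyi : y i = 0 := of_not_not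
        (fun h => hi (hsupp ▸ DFinsupp.mem_support_iff.2 h : i ∈ x.support))
      rw [hxi, hyi]
  · intro x y
    simp only
    rw [support_add, prod_symmDiff hsq]

end BooleanMonoid

theorem spow_mem_closed {A : Set S} (hA : ∀ x ∈ A, ∀ y ∈ A, x * y ∈ A)
    {x : S} (hx : x ∈ A) (k : ℕ) : spow x k ∈ A := by
  induction k with
  | zero => exact hx
  | succ k ih => exact hA _ ih _ hx

end TC

/-- True Color Lemma: for each semigroup `S` there is a 2-coloring of `S` such that
every almost-monochromatic subsemigroup of `S` is periodic, and every infinite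
almost-monochromatic subgroup of `S` contains `⊕ₙ ℤ/2` as a subgroup. -/
theorem true_color_lemma (S : Type*) [Semigroup S] :
    ∃ c : S → Fin 2,
      (∀ T : Subsemigroup S,
        (∃ col : Fin 2, {x ∈ (T : Set S) | c x ≠ col}.Finite) →
        ∀ t ∈ T, (Set.range (spow t)).Finite) ∧
      (∀ (G : Set S) (e : S), IsSubgroupSet G e → G.Infinite →
        (∃ col : Fin 2, {x ∈ G | c x ≠ col}.Finite) →
        ∃ f : DirectSum ℕ (fun _ => ZMod 2) → S, Function.Injective f ∧
          (∀ x y, f (x + y) = f x * f y) ∧ ∀ x, f x ∈ G) := by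
  classical
  refine ⟨TC.color, ?_, ?_⟩
  · intro T hmono t ht
    exact TC.per_of_almost (fun x hx y hy => T.mul_mem hx hy) hmono t ht
  · intro G e hG hGinf hmono
    obtain ⟨he, hmul, hid, hinvex⟩ := hG
    have hper : ∀ t ∈ G, TC.Per t := TC.per_of_almost hmul hmono
    -- total inverse function
    have hinv' : ∀ x : S, ∃ y, x ∈ G → (y ∈ G ∧ x * y = e ∧ y * x = e) := by
      intro x
      by_cases hx : x ∈ G
      · obtain ⟨y, hy, h1, h2⟩ := hinvex x hx
        exact ⟨y, fun _ => ⟨hy, h1, h2⟩⟩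
      · exact ⟨e, fun h => absurd h hx⟩
    set ι : S → S := fun x => (hinv' x).choose with hι_def
    have hι : ∀ x ∈ G, ι x ∈ G ∧ x * ι x = e ∧ ι x * x = e :=
      fun x hx => (hinv' x).choose_spec hx
    -- cancellation
    have lcancel : ∀ g ∈ G, ∀ a ∈ G, ∀ b ∈ G, g * a = g * b → a = b := by
      intro g hg a ha b hb hab
      have h1 : ι g * (g * a) = ι g * (g * b) := by rw [hab]
      rw [← mul_assoc, ← mul_assoc, (hι g hg).2.2, (hid a ha).1, (hid b hb).1] at h1
      exact h1
    have rcancel : ∀ g ∈ G, ∀ a ∈ G, ∀ b ∈ G, a * g = b * g → a = b := by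
      intro g hg a ha b hb hab
      have h1 : (a * g) * ι g = (b * g) * ι g := by rw [hab]
      rw [mul_assoc, mul_assoc, (hι g hg).2.1, (hid a ha).2, (hid b hb).2] at h1
      exact h1
    have inv_unique : ∀ g ∈ G, ∀ u ∈ G, g * u = e → u = ι g := by
      intro g hg u hu hgu
      have h1 : g * u = g * ι g := by rw [hgu, (hι g hg).2.1]
      exact lcancel g hg u hu (ι g) (hι g hg).1 h1
    -- order facts
    have hord_ex : ∀ x ∈ G, ∃ n, TC.IsOrd x n := by
      intro x hx
      have hperx := hper x hx
      have hninj : ¬ Function.Injective (spow x) := by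
        intro hinj
        exact (Set.infinite_range_of_injective hinj) hperx
      obtain ⟨i, j, hlt, hij⟩ : ∃ i j, i < j ∧ spow x i = spow x j := by
        simp only [Function.Injective, not_forall] at hninj
        obtain ⟨i, j, hij, hne⟩ := hninj
        rcases Nat.lt_or_ge i j with hlt | hge
        · exact ⟨i, j, hlt, hij⟩
        · exact ⟨j, i, by omega, hij.symm⟩
      have hexm : ∃ m, spow x (m + 1) = x := by
        have hk : i + (j - i - 1) + 1 = j := by omega
        have h1 : spow x i = spow x i * spow x (j - i - 1) := by
          conv_lhs => rw [hij]
          rw [← TC.spow_add, hk]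
        have h2 : spow x (j - i - 1) = e := by
          have h3 : spow x i * spow x (j - i - 1) = spow x i * e := by
            rw [← h1, (hid _ (TC.spow_mem_closed hmul hx i)).2]
          exact lcancel _ (TC.spow_mem_closed hmul hx i) _
            (TC.spow_mem_closed hmul hx _) _ he h3
        set k := j - i - 1 with hkdef
        rcases Nat.eq_zero_or_pos k with hk0 | hkpos
        · -- x = e
          have hxe : x = e := by rw [hk0] at h2; exact h2
          refine ⟨0, ?_⟩
          show spow x 0 * x = x
          rw [show spow x 0 = x from rfl, hxe, (hid e he).1]
        · refine ⟨k, ?_⟩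
          show spow x k * x = x
          rw [h2, (hid x hx).1]
      refine ⟨Nat.find hexm + 1, by omega, Nat.find_spec hexm, ?_⟩
      intro m hm1 hm2 hmx
      have : m - 1 < Nat.find hexm := by omega
      exact Nat.find_min hexm this (by rw [show m - 1 + 1 = m by omega]; exact hmx)
    -- elements with x * x ≠ e are in Dset with inverse invF x ∈ G
    have hee : e * e = e := (hid e he).1
    have hDmem : ∀ x ∈ G, x * x ≠ e → x ∈ TC.Dset S ∧ TC.invF x ∈ G := by
      intro x hx hxx
      obtain ⟨n, hord⟩ := hord_ex x hx
      have hn1 : n ≠ 1 := by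
        rintro rfl
        have h1 : spow x 1 = x := hord.2.1
        have h2 : x * x = x * e := by
          rw [(hid x hx).2]; exact h1
        have := lcancel x hx x hx e he h2
        exact hxx (by rw [this, hee])
      have hn2 : n ≠ 2 := by
        rintro rfl
        have h1 : spow x 2 = x := hord.2.1
        have h2 : (x * x) * x = e * x := by
          rw [(hid x hx).1]
          exact h1
        exact hxx (rcancel x hx _ (hmul _ hx _ hx) e he h2)
      have hn3 : 3 ≤ n := by
        have := hord.1
        omega
      have hD : x ∈ TC.Dset S := TC.mem_Dset hord hn3
      exact ⟨hD, TC.spow_mem_closed hmul hx _⟩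
    -- Gbad is finite
    set Gbad := {x ∈ G | x * x ≠ e} with hGbad_def
    have hGbadfin : Gbad.Finite := by
      by_contra hbad
      have hbadinf : Gbad.Infinite := hbad
      obtain ⟨col, hfin⟩ := hmono
      set ψ : S → S := fun x => if TC.color x ≠ col then x else TC.invF x with hψ
      have hψG : ∀ x ∈ Gbad, ψ x ∈ G ∧ TC.color (ψ x) ≠ col := by
        rintro x ⟨hx, hxx⟩
        obtain ⟨hD, hinvG⟩ := hDmem x hx hxx
        by_cases hc : TC.color x ≠ col
        · rw [hψ]; simp only [if_pos hc]; exact ⟨hx, hc⟩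
        · push_neg at hc
          have hDper : TC.Per x := TC.per_of_mem_Dset hD
          have hDper' : TC.Per (TC.invF x) := TC.per_of_mem_Dset (TC.invF_mem_Dset hD)
          have hpcne : TC.pc (TC.invF x) ≠ TC.pc x := TC.pc_invF hD
          have hcol1 : TC.color x = TC.pc x := TC.color_of_per hDper
          have hcol2 : TC.color (TC.invF x) = TC.pc (TC.invF x) := TC.color_of_per hDper'
          rw [hψ]; simp only [if_neg (not_not.2 hc)]
          refine ⟨hinvG, ?_⟩
          rw [hcol2, ← hc, hcol1]
          exact hpcne
      have hcover : Gbad ⊆ (ψ '' Gbad) ∪ (TC.invF '' (ψ '' Gbad)) := by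
        intro x hxG
        obtain ⟨hx, hxx⟩ := hxG
        obtain ⟨hD, _⟩ := hDmem x hx hxx
        by_cases hc : TC.color x ≠ col
        · apply Set.mem_union_left
          refine ⟨x, ⟨hx, hxx⟩, ?_⟩
          rw [hψ]; simp only [if_pos hc]
        · apply Set.mem_union_right
          refine ⟨ψ x, ⟨x, ⟨hx, hxx⟩, rfl⟩, ?_⟩
          rw [hψ]; simp only [if_neg hc]
          exact TC.invF_invF hD
      have himfin : (ψ '' Gbad).Finite := by
        apply hfin.subset
        rintro _ ⟨x, hxG, rfl⟩
        exact ⟨(hψG x hxG).1, (hψG x hxG).2⟩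
      exact hbadinf ((himfin.union (himfin.image _)).subset hcover)
    -- "good" elements for a fixed g
    have hbadfin2 : ∀ g ∈ G, {t ∈ G | ¬ (t * t = e ∧ (g*t)*(g*t) = e)}.Finite := by
      intro g hg
      have h2 : {t ∈ G | (g*t)*(g*t) ≠ e}.Finite := by
        have himg : (fun t => g * t) '' {t ∈ G | (g*t)*(g*t) ≠ e} ⊆ Gbad := by
          rintro _ ⟨t, ⟨ht, hne⟩, rfl⟩
          exact ⟨hmul g hg t ht, hne⟩
        have hinj : Set.InjOn (fun t => g * t) {t ∈ G | (g*t)*(g*t) ≠ e} :=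
          fun a ha b hb hab => lcancel g hg a ha.1 b hb.1 hab
        exact Set.Finite.of_finite_image (hGbadfin.subset himg) hinj
      have hsub : {t ∈ G | ¬ (t * t = e ∧ (g*t)*(g*t) = e)} ⊆
          Gbad ∪ {t ∈ G | (g*t)*(g*t) ≠ e} := by
        rintro t ⟨ht, hcond⟩
        by_cases htt : t * t = e
        · exact Or.inr ⟨ht, fun h => hcond ⟨htt, h⟩⟩
        · exact Or.inl ⟨ht, htt⟩
      exact (hGbadfin.union h2).subset hsub
    have key_conj : ∀ g ∈ G, ∀ t ∈ G, t * t = e → (g*t)*(g*t) = e → (t*g)*t = ι g := by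
      intro g hg t ht htt hgt
      apply inv_unique g hg _ (hmul _ (hmul t ht g hg) t ht)
      rw [mul_assoc t g t, ← mul_assoc g t (g*t)]
      exact hgt
    -- commutativity
    have comm : ∀ g ∈ G, ∀ h ∈ G, g * h = h * g := by
      intro g hg h hh
      have hB1 := hbadfin2 g hg
      have hB2 : {t ∈ G | ¬ ((h*t) * (h*t) = e ∧ (g*(h*t))*(g*(h*t)) = e)}.Finite := by
        have himg : (fun t => h * t) ''
            {t ∈ G | ¬ ((h*t) * (h*t) = e ∧ (g*(h*t))*(g*(h*t)) = e)} ⊆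
            {t ∈ G | ¬ (t * t = e ∧ (g*t)*(g*t) = e)} := by
          rintro _ ⟨t, ⟨ht, hc⟩, rfl⟩
          exact ⟨hmul h hh t ht, hc⟩
        have hinj : Set.InjOn (fun t => h * t)
            {t ∈ G | ¬ ((h*t) * (h*t) = e ∧ (g*(h*t))*(g*(h*t)) = e)} :=
          fun a ha b hb hab => lcancel h hh a ha.1 b hb.1 hab
        exact Set.Finite.of_finite_image (hB1.subset himg) hinj
      obtain ⟨t, htG, htnb⟩ := (hGinf.diff (hB1.union hB2)).nonempty
      have ht1 : t * t = e ∧ (g*t)*(g*t) = e := by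
        by_contra hc; exact htnb (Or.inl ⟨htG, hc⟩)
      have ht2 : (h*t) * (h*t) = e ∧ (g*(h*t))*(g*(h*t)) = e := by
        by_contra hc; exact htnb (Or.inr ⟨htG, hc⟩)
      have huG : h * t ∈ G := hmul h hh t htG
      have hk1 : (t*g)*t = ι g := key_conj g hg t htG ht1.1 ht1.2
      have hk2 : ((h*t)*g)*(h*t) = ι g := key_conj g hg (h*t) huG ht2.1 ht2.2
      have e1 : t * g = ι g * t := by
        calc t*g = (t*g)*e := ((hid _ (hmul t htG g hg)).2).symm
          _ = (t*g)*(t*t) := by rw [ht1.1]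
          _ = ((t*g)*t)*t := (mul_assoc _ t t).symm
          _ = ι g * t := by rw [hk1]
      have e2 : (h*t) * ι g = g * (h*t) := by
        calc (h*t) * ι g = (h*t) * (((h*t)*g)*(h*t)) := by rw [hk2]
          _ = (h*t) * ((h*t)*(g*(h*t))) := by rw [mul_assoc (h*t) g (h*t)]
          _ = ((h*t)*(h*t))*(g*(h*t)) := (mul_assoc _ _ _).symm
          _ = e*(g*(h*t)) := by rw [ht2.1]
          _ = g*(h*t) := (hid _ (hmul g hg _ huG)).1
      have e3 : (h*t)*t = h := by rw [mul_assoc, ht1.1, (hid h hh).2]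
      refine Eq.symm ?_
      calc h*g = ((h*t)*t)*g := by rw [e3]
        _ = (h*t)*(t*g) := mul_assoc _ _ _
        _ = (h*t)*(ι g * t) := by rw [e1]
        _ = ((h*t)* ι g)*t := (mul_assoc _ _ _).symm
        _ = (g*(h*t))*t := by rw [e2]
        _ = g*((h*t)*t) := mul_assoc _ _ _
        _ = g*h := by rw [e3]
    -- all squares are the identity
    have hsqe : ∀ g ∈ G, g * g = e := by
      intro g hg
      by_contra hgg
      have hG2inf : (G \ Gbad).Infinite := hGinf.diff hGbadfin
      have himg : (fun t => g * t) '' (G \ Gbad) ⊆ Gbad := by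
        rintro _ ⟨t, ⟨htG, htnb⟩, rfl⟩
        have htt : t * t = e := by
          by_contra hc; exact htnb ⟨htG, hc⟩
        refine ⟨hmul g hg t htG, ?_⟩
        have heq : (g*t)*(g*t) = g*g := by
          calc (g*t)*(g*t) = g*(t*(g*t)) := mul_assoc _ _ _
            _ = g*((t*g)*t) := by rw [mul_assoc t g t]
            _ = g*((g*t)*t) := by rw [comm t htG g hg]
            _ = g*(g*(t*t)) := by rw [mul_assoc g t t]
            _ = g*(g*e) := by rw [htt]
            _ = g*g := by rw [(hid g hg).2]
        rw [heq]; exact hgg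
      have hinj : Set.InjOn (fun t => g * t) (G \ Gbad) :=
        fun a ha b hb hab => lcancel g hg a ha.1 b hb.1 hab
      exact hG2inf (Set.Finite.of_finite_image (hGbadfin.subset himg) hinj)
    -- G is an infinite boolean commutative monoid
    letI : Mul (↥G) := ⟨fun a b => ⟨a.1 * b.1, hmul _ a.2 _ b.2⟩⟩
    letI : One (↥G) := ⟨⟨e, he⟩⟩
    letI : CommMonoid (↥G) :=
      { mul := (· * ·), one := 1,
        mul_assoc := fun a b c => Subtype.ext (mul_assoc a.1 b.1 c.1),
        one_mul := fun a => Subtype.ext ((hid a.1 a.2).1),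
        mul_one := fun a => Subtype.ext ((hid a.1 a.2).2),
        mul_comm := fun a b => Subtype.ext (comm a.1 a.2 b.1 b.2) }
    haveI : Infinite (↥G) := hGinf.to_subtype
    obtain ⟨f0, hinj0, hhom0⟩ := TC.exists_directSum_hom (M := ↥G)
      (fun a => Subtype.ext (hsqe a.1 a.2))
    refine ⟨fun x => (f0 x : S), ?_, ?_, fun x => (f0 x).2⟩
    · intro a b hab
      exact hinj0 (Subtype.ext hab)
    · intro x y
      show ((f0 (x + y) : ↥G) : S) = ((f0 x : ↥G) : S) * ((f0 y : ↥G) : S)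
      rw [hhom0]
      rfl
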